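/- Fix n ≥ 1 and 1 ≤ s ≤ n, and let G = ⟨Z₁, …, Z_s⟩ ⊆ M_{2^n}(ℂ). Then the linear span, over all M₀ ∈ M_{2^n}(ℂ) for which 𝒱_{M₀} := span_ℂ{g M₀ g : g ∈ G} contains the identity and is closed under adjoints, of the subspaces 𝒱_{M₀}, equals span_ℂ({I₂^{⊗n}} ∪ {σ_{j₁} ⊗ ⋯ ⊗ σ_{jₙ} : j₁, …, jₙ ∈ {0,1,2,3} and there exists 1 ≤ r ≤ s with j_r ∈ {2,3}}). -/

import Mathlib

open Matrix

/-- The four Pauli matrices: `σ₀ = I₂`, `σ₁ = Z`, `σ₂ = X`, `σ₃ = Y`. -/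
noncomputable def pauli : Fin 4 → Matrix (Fin 2) (Fin 2) ℂ
  | 0 => 1
  | 1 => !![1, 0; 0, -1]
  | 2 => !![0, 1; 1, 0]
  | 3 => !![0, Complex.I; -Complex.I, 0]

/-- The Pauli word `σ_{j₁} ⊗ ⋯ ⊗ σ_{jₙ} ∈ M_{2^n}(ℂ)`, as a matrix indexed by
`{0,1}^n`, with entry `∏ i, (σ_{j i}) (a i) (b i)`. -/
noncomputable def pauliWord {n : ℕ} (j : Fin n → Fin 4) :
    Matrix (Fin n → Fin 2) (Fin n → Fin 2) ℂ :=
  Matrix.of fun a b => ∏ i, pauli (j i) (a i) (b i)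

/-- `Z_r`: the Pauli word with `Z` in the `r`-th position and `I₂` elsewhere. -/
noncomputable def Zword {n : ℕ} (r : Fin n) :
    Matrix (Fin n → Fin 2) (Fin n → Fin 2) ℂ :=
  pauliWord (fun i => if i = r then 1 else 0)

/-- The subgroup (as a multiplicative submonoid: the generators are involutions,
so the generated submonoid is the generated subgroup) `⟨Z₁, …, Z_s⟩` of `M_{2^n}(ℂ)`. -/
noncomputable def ZSubgroup (n s : ℕ) :
    Submonoid (Matrix (Fin n → Fin 2) (Fin n → Fin 2) ℂ) :=
  Submonoid.closure {A | ∃ r : Fin n, (r : ℕ) < s ∧ A = Zword r}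

/-- The Pauli group `𝒫_n` on `n` qubits, as a set of matrices. -/
noncomputable def pauliGroupSet (n : ℕ) :
    Set (Matrix (Fin n → Fin 2) (Fin n → Fin 2) ℂ) :=
  {A | ∃ c ∈ ({1, -1, Complex.I, -Complex.I} : Set ℂ),
    ∃ j : Fin n → Fin 4, A = c • pauliWord j}

/-- for `G = ⟨Z₁, …, Z_s⟩`, the linear span (supremum), over all
`M₀ ∈ M_{2^n}(ℂ)` for which `𝒱_{M₀} = span{g M₀ g : g ∈ G}` contains the identity
and is closed under adjoints, of the subspaces `𝒱_{M₀}`, equals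
`span({I₂^{⊗n}} ∪ {σ_{j₁} ⊗ ⋯ ⊗ σ_{jₙ} : ∃ r ≤ s, j_r ∈ {2,3}})`. -/
lemma pauli_conj (j : Fin 4) (a b : Fin 2) :
    star (pauli j a b) = pauli j b a := by
  fin_cases j <;> fin_cases a <;> fin_cases b <;> simp [pauli]

lemma pauliWord_conjTranspose {n : ℕ} (j : Fin n → Fin 4) :
    (pauliWord j)ᴴ = pauliWord j := by
  ext a b
  simp only [conjTranspose_apply, pauliWord, Matrix.of_apply, star_prod]
  exact Finset.prod_congr rfl fun i _ => pauli_conj _ _ _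

-- per-coordinate pauli index choice
def pIdx (x y : Fin 2) (k : Fin 2) : Fin 4 :=
  if x = y then (if k = 0 then 0 else 1) else (if k = 0 then 2 else 3)

lemma pIdx_ge (x y : Fin 2) (k : Fin 2) (h : x ≠ y) : 2 ≤ (pIdx x y k : ℕ) := by
  unfold pIdx; rw [if_neg h]; split <;> decide

lemma coord_sum (x y x' y' : Fin 2) :
    ∑ k : Fin 2, star (pauli (pIdx x y k) x y) * pauli (pIdx x y k) x' y' =
      if x' = x ∧ y' = y then 2 else 0 := by
  fin_cases x <;> fin_cases y <;> fin_cases x' <;> fin_cases y' <;>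
    simp [Fin.sum_univ_two, pIdx, pauli] <;> norm_num

lemma word_sum {n : ℕ} (a b a' b' : Fin n → Fin 2) :
    ∑ k : Fin n → Fin 2, star (pauliWord (fun i => pIdx (a i) (b i) (k i)) a b) *
      pauliWord (fun i => pIdx (a i) (b i) (k i)) a' b' =
    if a' = a ∧ b' = b then (2 : ℂ) ^ n else 0 := by
  have h1 : ∀ k : Fin n → Fin 2,
      star (pauliWord (fun i => pIdx (a i) (b i) (k i)) a b) *
        pauliWord (fun i => pIdx (a i) (b i) (k i)) a' b' =
      ∏ i, star (pauli (pIdx (a i) (b i) (k i)) (a i) (b i)) *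
        pauli (pIdx (a i) (b i) (k i)) (a' i) (b' i) := by
    intro k
    simp [pauliWord, star_prod, ← Finset.prod_mul_distrib]
  rw [Finset.sum_congr rfl fun k _ => h1 k,
    ← Fintype.prod_sum (fun i κ => star (pauli (pIdx (a i) (b i) κ) (a i) (b i)) *
      pauli (pIdx (a i) (b i) κ) (a' i) (b' i))]
  have h2 : ∀ i, (∑ κ : Fin 2, star (pauli (pIdx (a i) (b i) κ) (a i) (b i)) *
      pauli (pIdx (a i) (b i) κ) (a' i) (b' i)) =
      if a' i = a i ∧ b' i = b i then 2 else 0 := fun i => coord_sum _ _ _ _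
  rw [Finset.prod_congr rfl fun i _ => h2 i]
  by_cases h : a' = a ∧ b' = b
  · rw [if_pos h]
    obtain ⟨ha, hb⟩ := h; subst ha; subst hb
    simp
  · rw [if_neg h]
    have : ∃ i, ¬(a' i = a i ∧ b' i = b i) := by
      by_contra hc
      push_neg at hc
      exact h ⟨funext fun i => (hc i).1, funext fun i => (hc i).2⟩
    obtain ⟨i, hi⟩ := this
    exact Finset.prod_eq_zero (Finset.mem_univ i) (if_neg hi)

noncomputable def genSet (n s : ℕ) : Set (Matrix (Fin n → Fin 2) (Fin n → Fin 2) ℂ) :=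
  {(1 : Matrix (Fin n → Fin 2) (Fin n → Fin 2) ℂ)} ∪
    {x | ∃ j : Fin n → Fin 4, (∃ r : Fin n, (r : ℕ) < s ∧ 2 ≤ (j r : ℕ)) ∧ x = pauliWord j}

lemma std_mem {n s : ℕ} (a b : Fin n → Fin 2) (r : Fin n) (hr : (r : ℕ) < s)
    (hab : a r ≠ b r) :
    Matrix.single a b (1 : ℂ) ∈ Submodule.span ℂ (genSet n s) := by
  have key : (∑ k : Fin n → Fin 2,
      star (pauliWord (fun i => pIdx (a i) (b i) (k i)) a b) •
        pauliWord (fun i => pIdx (a i) (b i) (k i))) =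
      ((2 : ℂ) ^ n) • Matrix.single a b (1 : ℂ) := by
    ext a' b'
    rw [Matrix.sum_apply]
    simp only [Matrix.smul_apply, smul_eq_mul]
    rw [word_sum a b a' b', Matrix.single]
    rw [Matrix.of_apply]
    by_cases h : a' = a ∧ b' = b
    · rw [if_pos h, if_pos ⟨h.1.symm, h.2.symm⟩]; simp
    · rw [if_neg h, if_neg (fun hc => h ⟨hc.1.symm, hc.2.symm⟩)]; simp
  have h2n : ((2 : ℂ) ^ n) ≠ 0 := pow_ne_zero _ two_ne_zero
  have : Matrix.single a b (1 : ℂ) = ((2 : ℂ) ^ n)⁻¹ • ∑ k : Fin n → Fin 2,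
      star (pauliWord (fun i => pIdx (a i) (b i) (k i)) a b) •
        pauliWord (fun i => pIdx (a i) (b i) (k i)) := by
    rw [key, smul_smul, inv_mul_cancel₀ h2n, one_smul]
  rw [this]
  refine Submodule.smul_mem _ _ (Submodule.sum_mem _ fun k _ => Submodule.smul_mem _ _ ?_)
  refine Submodule.subset_span (Or.inr ?_)
  exact ⟨_, ⟨r, hr, pIdx_ge _ _ _ hab⟩, rfl⟩

lemma vanish_mem {n s : ℕ} (M : Matrix (Fin n → Fin 2) (Fin n → Fin 2) ℂ)
    (hM : ∀ a b, (∀ r : Fin n, (r : ℕ) < s → a r = b r) → M a b = 0) :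
    M ∈ Submodule.span ℂ (genSet n s) := by
  rw [Matrix.matrix_eq_sum_single M]
  refine Submodule.sum_mem _ fun a _ => Submodule.sum_mem _ fun b _ => ?_
  by_cases h : ∀ r : Fin n, (r : ℕ) < s → a r = b r
  · rw [hM a b h, Matrix.single_zero]
    exact Submodule.zero_mem _
  · push_neg at h
    obtain ⟨r, hr, hab⟩ := h
    rw [show Matrix.single a b (M a b) = M a b • Matrix.single a b (1 : ℂ) by
      rw [Matrix.smul_single, smul_eq_mul, mul_one]]
    exact Submodule.smul_mem _ _ (std_mem a b r hr hab)

lemma pauli_diag_zero (j : Fin 4) (hj : 2 ≤ (j : ℕ)) (x : Fin 2) : pauli j x x = 0 := by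
  fin_cases j <;> simp_all <;> fin_cases x <;> simp [pauli]

lemma pauli_zero_diag (x : Fin 2) : pauli 0 x x = 1 := by
  fin_cases x <;> simp [pauli]

lemma pauli_one_diag (x : Fin 2) : pauli 1 x x = if x = 0 then (1 : ℂ) else -1 := by
  fin_cases x <;> simp [pauli]

lemma pauli01_off (j : Fin 4) (hj : (j : ℕ) < 2) (x y : Fin 2) (h : x ≠ y) :
    pauli j x y = 0 := by
  fin_cases j <;> simp_all <;> fin_cases x <;> fin_cases y <;> simp_all [pauli]

lemma Zword_diag {n : ℕ} (r : Fin n) :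
    Zword r = Matrix.diagonal (fun a => if a r = 0 then (1 : ℂ) else -1) := by
  ext a b
  rw [Zword, pauliWord, Matrix.of_apply]
  by_cases hab : a = b
  · subst hab
    rw [Matrix.diagonal_apply_eq]
    rw [Finset.prod_eq_single_of_mem r (Finset.mem_univ r)
      (fun i _ hi => by rw [if_neg hi]; exact pauli_zero_diag _)]
    rw [if_pos rfl]
    exact pauli_one_diag _
  · rw [Matrix.diagonal_apply_ne _ hab]
    have : ∃ i, a i ≠ b i := by
      by_contra hc; push_neg at hc; exact hab (funext hc)
    obtain ⟨i, hi⟩ := this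
    refine Finset.prod_eq_zero (Finset.mem_univ i) ?_
    by_cases hir : i = r
    · rw [if_pos hir]; exact pauli01_off _ (by norm_num) _ _ hi
    · rw [if_neg hir]; exact pauli01_off _ (by norm_num) _ _ hi

def IsEps (n s : ℕ) (g : Matrix (Fin n → Fin 2) (Fin n → Fin 2) ℂ) : Prop :=
  ∃ ε : (Fin n → Fin 2) → ℂ, g = Matrix.diagonal ε ∧ (∀ a, ε a = 1 ∨ ε a = -1) ∧
    ∀ a b : Fin n → Fin 2, (∀ r : Fin n, (r : ℕ) < s → a r = b r) → ε a = ε b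

lemma ZG_eps {n s : ℕ} (g : Matrix (Fin n → Fin 2) (Fin n → Fin 2) ℂ)
    (hg : g ∈ ZSubgroup n s) : IsEps n s g := by
  induction hg using Submonoid.closure_induction with
  | one => exact ⟨fun _ => 1, by simp [Matrix.diagonal_one], fun a => Or.inl rfl,
      fun _ _ _ => rfl⟩
  | mem A hA =>
    obtain ⟨r, hr, rfl⟩ := hA
    refine ⟨fun a => if a r = 0 then (1 : ℂ) else -1, Zword_diag r, fun a => ?_,
      fun a b hab => ?_⟩
    · dsimp only; split <;> simp
    · dsimp only; rw [hab r hr]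
  | mul A B _ _ hA hB =>
    obtain ⟨ε, rfl, hε1, hε2⟩ := hA
    obtain ⟨δ, rfl, hδ1, hδ2⟩ := hB
    refine ⟨fun a => ε a * δ a, by rw [Matrix.diagonal_mul_diagonal], fun a => ?_,
      fun a b hab => ?_⟩
    · dsimp only
      rcases hε1 a with h | h <;> rcases hδ1 a with h' | h' <;> rw [h, h'] <;> norm_num
    · dsimp only
      rw [hε2 a b hab, hδ2 a b hab]

noncomputable def Qmap (n s : ℕ) :
    Matrix (Fin n → Fin 2) (Fin n → Fin 2) ℂ →ₗ[ℂ]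
      Matrix (Fin n → Fin 2) (Fin n → Fin 2) ℂ where
  toFun M := Matrix.of fun a b =>
    if ∀ r : Fin n, (r : ℕ) < s → a r = b r then M a b else 0
  map_add' M N := by
    ext a b; simp only [Matrix.of_apply, Matrix.add_apply]; split <;> simp
  map_smul' c M := by
    ext a b; simp only [Matrix.of_apply, Matrix.smul_apply, RingHom.id_apply]
    split <;> simp

lemma Qmap_one (n s : ℕ) : Qmap n s 1 = 1 := by
  ext a b
  show (if ∀ r : Fin n, (r : ℕ) < s → a r = b r then (1 : Matrix _ _ ℂ) a b else 0) = _
  by_cases hab : a = b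
  · subst hab; rw [if_pos fun _ _ => rfl]
  · split <;> simp [Matrix.one_apply_ne hab]

lemma Qmap_conj {n s : ℕ} (g M₀ : Matrix (Fin n → Fin 2) (Fin n → Fin 2) ℂ)
    (hg : g ∈ ZSubgroup n s) : Qmap n s (g * M₀ * g) = Qmap n s M₀ := by
  obtain ⟨ε, rfl, hε1, hε2⟩ := ZG_eps g hg
  ext a b
  show (if ∀ r : Fin n, (r : ℕ) < s → a r = b r then _ else (0:ℂ)) =
    (if ∀ r : Fin n, (r : ℕ) < s → a r = b r then _ else 0)
  split
  case isFalse => rfl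
  case isTrue h =>
    rw [Matrix.mul_diagonal, Matrix.diagonal_mul, ← hε2 a b h]
    have : ε a * ε a = 1 := by rcases hε1 a with h' | h' <;> rw [h'] <;> norm_num
    ring_nf
    rw [sq, this, one_mul]

lemma V_le {n s : ℕ} (M₀ : Matrix (Fin n → Fin 2) (Fin n → Fin 2) ℂ)
    (h1 : (1 : Matrix (Fin n → Fin 2) (Fin n → Fin 2) ℂ) ∈
      Submodule.span ℂ {x | ∃ g ∈ ZSubgroup n s, x = g * M₀ * g}) :
    Submodule.span ℂ {x | ∃ g ∈ ZSubgroup n s, x = g * M₀ * g} ≤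
      Submodule.span ℂ (genSet n s) := by
  -- 1 is in the span of {Qmap M₀}
  have hQ1 : (1 : Matrix (Fin n → Fin 2) (Fin n → Fin 2) ℂ) ∈
      Submodule.span ℂ {Qmap n s M₀} := by
    have := Submodule.mem_map_of_mem (f := Qmap n s) h1
    rw [Submodule.map_span] at this
    rw [Qmap_one] at this
    refine Submodule.span_mono ?_ this
    rintro x ⟨y, ⟨g, hg, rfl⟩, rfl⟩
    exact Qmap_conj g M₀ hg
  obtain ⟨c, hc⟩ := Submodule.mem_span_singleton.mp hQ1
  have hc0 : c ≠ 0 := by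
    rintro rfl
    rw [zero_smul] at hc
    exact one_ne_zero hc.symm
  have hQM : Qmap n s M₀ = c⁻¹ • (1 : Matrix (Fin n → Fin 2) (Fin n → Fin 2) ℂ) := by
    rw [← hc, smul_smul, inv_mul_cancel₀ hc0, one_smul]
  rw [Submodule.span_le]
  rintro x ⟨g, hg, rfl⟩
  have hsplit : g * M₀ * g = (g * M₀ * g - Qmap n s M₀) + c⁻¹ • 1 := by
    rw [← hQM]; abel
  rw [hsplit]
  refine Submodule.add_mem _ (vanish_mem _ fun a b hab => ?_)
    (Submodule.smul_mem _ _ (Submodule.subset_span (Or.inl rfl)))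
  rw [Matrix.sub_apply, ← Qmap_conj g M₀ hg]
  show _ - (if ∀ r : Fin n, (r : ℕ) < s → a r = b r then _ else (0:ℂ)) = 0
  rw [if_pos hab, sub_self]

lemma adj_closed {n s : ℕ} (M₀ : Matrix (Fin n → Fin 2) (Fin n → Fin 2) ℂ)
    (hM₀ : M₀ᴴ = M₀) :
    ∀ A ∈ Submodule.span ℂ {x | ∃ g ∈ ZSubgroup n s, x = g * M₀ * g},
      Aᴴ ∈ Submodule.span ℂ {x | ∃ g ∈ ZSubgroup n s, x = g * M₀ * g} := by
  intro A hA
  induction hA using Submodule.span_induction with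
  | mem x hx =>
    obtain ⟨g, hg, rfl⟩ := hx
    obtain ⟨ε, hgd, hε1, _⟩ := ZG_eps g hg
    have hse : star ε = ε := funext fun a => by
      rcases hε1 a with h | h <;> simp [Pi.star_apply, h]
    have hgH : gᴴ = g := by
      rw [hgd, Matrix.diagonal_conjTranspose, hse]
    have : (g * M₀ * g)ᴴ = g * M₀ * g := by
      rw [Matrix.conjTranspose_mul, Matrix.conjTranspose_mul, hgH, hM₀, mul_assoc]
    rw [this]
    exact Submodule.subset_span ⟨g, hg, rfl⟩
  | zero => simpa using Submodule.zero_mem _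
  | add x y _ _ hx hy => rw [Matrix.conjTranspose_add]; exact Submodule.add_mem _ hx hy
  | smul c x _ hx =>
    rw [Matrix.conjTranspose_smul]
    exact Submodule.smul_mem _ _ hx

lemma sign_off (x y : Fin 2) (h : x ≠ y) :
    (if x = 0 then (1:ℂ) else -1) * (if y = 0 then (1:ℂ) else -1) = -1 := by
  fin_cases x <;> fin_cases y <;> simp_all

lemma Zword_conj {n : ℕ} (j : Fin n → Fin 4) (r : Fin n) (hjr : 2 ≤ (j r : ℕ)) :
    Zword r * (1 + pauliWord j) * Zword r = 1 - pauliWord j := by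
  have hd2 : ∀ a : Fin n → Fin 2,
      (if a r = 0 then (1:ℂ) else -1) * (if a r = 0 then (1:ℂ) else -1) = 1 := by
    intro a; split <;> norm_num
  rw [Zword_diag]
  ext a b
  rw [Matrix.mul_diagonal, Matrix.diagonal_mul]
  rw [Matrix.add_apply, Matrix.sub_apply]
  by_cases hab : a r = b r
  · have hw : pauliWord j a b = 0 := by
      rw [pauliWord, Matrix.of_apply]
      refine Finset.prod_eq_zero (Finset.mem_univ r) ?_
      rw [hab]
      exact pauli_diag_zero _ hjr _
    rw [hw, add_zero, sub_zero]
    by_cases h : a = b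
    · subst h; rw [Matrix.one_apply_eq]
      calc (if a r = 0 then (1:ℂ) else -1) * 1 * (if a r = 0 then (1:ℂ) else -1)
          = (if a r = 0 then (1:ℂ) else -1) * (if a r = 0 then (1:ℂ) else -1) := by ring
        _ = 1 := hd2 a
    · rw [Matrix.one_apply_ne h]; ring
  · have h1 : (1 : Matrix (Fin n → Fin 2) (Fin n → Fin 2) ℂ) a b = 0 :=
      Matrix.one_apply_ne (fun hc => hab (by rw [hc]))
    rw [h1, zero_add, zero_sub]
    calc (if a r = 0 then (1:ℂ) else -1) * pauliWord j a b * (if b r = 0 then (1:ℂ) else -1)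
        = ((if a r = 0 then (1:ℂ) else -1) * (if b r = 0 then (1:ℂ) else -1)) *
          pauliWord j a b := by ring
      _ = -pauliWord j a b := by rw [sign_off _ _ hab]; ring

theorem statement7 (n s : ℕ) (hn : 1 ≤ n) (hs : 1 ≤ s) (hsn : s ≤ n)
    (V : Matrix (Fin n → Fin 2) (Fin n → Fin 2) ℂ →
      Submodule ℂ (Matrix (Fin n → Fin 2) (Fin n → Fin 2) ℂ))
    (hV : ∀ M₀, V M₀ = Submodule.span ℂ {x | ∃ g ∈ ZSubgroup n s, x = g * M₀ * g}) :
    (⨆ M₀ ∈ {M : Matrix (Fin n → Fin 2) (Fin n → Fin 2) ℂ |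
        (1 : Matrix (Fin n → Fin 2) (Fin n → Fin 2) ℂ) ∈ V M ∧ ∀ A ∈ V M, Aᴴ ∈ V M},
      V M₀) =
    Submodule.span ℂ ({(1 : Matrix (Fin n → Fin 2) (Fin n → Fin 2) ℂ)} ∪
      {x | ∃ j : Fin n → Fin 4, (∃ r : Fin n, (r : ℕ) < s ∧ 2 ≤ (j r : ℕ)) ∧
        x = pauliWord j}) := by
  have hgen : ({(1 : Matrix (Fin n → Fin 2) (Fin n → Fin 2) ℂ)} ∪
      {x | ∃ j : Fin n → Fin 4, (∃ r : Fin n, (r : ℕ) < s ∧ 2 ≤ (j r : ℕ)) ∧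
        x = pauliWord j}) = genSet n s := rfl
  rw [hgen]
  apply le_antisymm
  · refine iSup₂_le fun M₀ hM₀ => ?_
    rw [hV M₀]
    refine V_le M₀ ?_
    rw [← hV M₀]
    exact hM₀.1
  · rw [Submodule.span_le]
    rintro x (hx | ⟨j, ⟨r, hr, hjr⟩, rfl⟩)
    · -- x = 1
      rw [Set.mem_singleton_iff] at hx
      subst hx
      have h1V : (1 : Matrix (Fin n → Fin 2) (Fin n → Fin 2) ℂ) ∈ V 1 := by
        rw [hV]
        exact Submodule.subset_span ⟨1, Submonoid.one_mem _, by simp⟩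
      have hM : (1 : Matrix (Fin n → Fin 2) (Fin n → Fin 2) ℂ) ∈
          {M : Matrix (Fin n → Fin 2) (Fin n → Fin 2) ℂ |
            (1 : Matrix (Fin n → Fin 2) (Fin n → Fin 2) ℂ) ∈ V M ∧
              ∀ A ∈ V M, Aᴴ ∈ V M} := by
        refine ⟨h1V, fun A hA => ?_⟩
        rw [hV] at hA ⊢
        exact adj_closed 1 Matrix.conjTranspose_one A hA
      exact le_iSup₂ (f := fun M₀ _ => V M₀) 1 hM h1V
    · -- x = pauliWord j
      set M₀ : Matrix (Fin n → Fin 2) (Fin n → Fin 2) ℂ := 1 + pauliWord j with hM₀def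
      have hM₀H : M₀ᴴ = M₀ := by
        rw [hM₀def, Matrix.conjTranspose_add, Matrix.conjTranspose_one,
          pauliWord_conjTranspose]
      have hM₀mem : M₀ ∈ Submodule.span ℂ {x | ∃ g ∈ ZSubgroup n s, x = g * M₀ * g} :=
        Submodule.subset_span ⟨1, Submonoid.one_mem _, by simp⟩
      have hx₂mem : (1 - pauliWord j) ∈
          Submodule.span ℂ {x | ∃ g ∈ ZSubgroup n s, x = g * M₀ * g} :=
        Submodule.subset_span ⟨Zword r, Submonoid.subset_closure ⟨r, hr, rfl⟩,
          (Zword_conj j r hjr).symm⟩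
      have h1V : (1 : Matrix (Fin n → Fin 2) (Fin n → Fin 2) ℂ) ∈ V M₀ := by
        rw [hV]
        have key : (1 : Matrix (Fin n → Fin 2) (Fin n → Fin 2) ℂ) =
            (2⁻¹ : ℂ) • (M₀ + (1 - pauliWord j)) := by
          rw [hM₀def]; module
        rw [key]
        exact Submodule.smul_mem _ _ (Submodule.add_mem _ hM₀mem hx₂mem)
      have hwV : pauliWord j ∈ V M₀ := by
        rw [hV]
        have key : pauliWord j = (2⁻¹ : ℂ) • (M₀ - (1 - pauliWord j)) := by
          rw [hM₀def]; module
        rw [key]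
        exact Submodule.smul_mem _ _ (Submodule.sub_mem _ hM₀mem hx₂mem)
      have hM : M₀ ∈ {M : Matrix (Fin n → Fin 2) (Fin n → Fin 2) ℂ |
          (1 : Matrix (Fin n → Fin 2) (Fin n → Fin 2) ℂ) ∈ V M ∧
            ∀ A ∈ V M, Aᴴ ∈ V M} := by
        refine ⟨h1V, fun A hA => ?_⟩
        rw [hV] at hA ⊢
        exact adj_closed M₀ hM₀H A hA
      exact le_iSup₂ (f := fun M₀ _ => V M₀) M₀ hM hwV
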